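/- arXiv:2601.05146 — 2 statements merged into one kernel-verified Lean document; each statement's English description precedes it below -/
import Mathlib

section
/- Let X be a Banach space, r* > 0, x̄ ∈ X, and T : B̄(x̄, r*) → X a C¹ map. Suppose Y, Z, W ≥ 0 satisfy: ‖T(x̄) − x̄‖ ≤ Y; ‖DT(x̄)‖ ≤ Z; and ‖DT(x) − DT(x̄)‖ ≤ W‖x − x̄‖ for all x ∈ B̄(x̄, r*). If there exists r ∈ (0, r*] with Y + Z r + (1/2) W r² ≤ r and Z + W r < 1, then T has a unique fixed point in the closed ball B̄(x̄, r). -/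
open Metric

/-- Simplified Newton–Kantorovich / Banach fixed point theorem with `Y`, `Z`, `W` bounds:
if `‖T x̄ − x̄‖ ≤ Y`, `‖DT x̄‖ ≤ Z`, `‖DT x − DT x̄‖ ≤ W ‖x − x̄‖` on the closed ball of
radius `r*`, and `Y + Z r + W r²/2 ≤ r`, `Z + W r < 1` for some `0 < r ≤ r*`, then `T` has a
unique fixed point in the closed ball of radius `r` around `x̄`. -/
theorem stmt3_fixed_point {X : Type*} [NormedAddCommGroup X] [NormedSpace ℝ X] [CompleteSpace X]
    (rstar : ℝ) (hrstar : 0 < rstar) (xbar : X) (T : X → X) (DT : X → X →L[ℝ] X)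
    (hC1 : ∀ x ∈ closedBall xbar rstar, HasFDerivAt T (DT x) x)
    (Y Z W : ℝ) (hY0 : 0 ≤ Y) (hZ0 : 0 ≤ Z) (hW0 : 0 ≤ W)
    (hY : ‖T xbar - xbar‖ ≤ Y)
    (hZ : ‖DT xbar‖ ≤ Z)
    (hW : ∀ x ∈ closedBall xbar rstar, ‖DT x - DT xbar‖ ≤ W * ‖x - xbar‖)
    (r : ℝ) (hr : r ∈ Set.Ioc 0 rstar)
    (h1 : Y + Z * r + (1 / 2) * W * r ^ 2 ≤ r)
    (h2 : Z + W * r < 1) :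
    ∃! x : X, x ∈ closedBall xbar r ∧ T x = x := by
  obtain ⟨hr0, hrr⟩ := hr
  have hsub : closedBall xbar r ⊆ closedBall xbar rstar := closedBall_subset_closedBall hrr
  -- Taylor estimate: for x in the ball, ‖T x - T xbar - DT xbar (x - xbar)‖ ≤ W/2 ‖x-xbar‖²
  have taylor : ∀ x ∈ closedBall xbar r,
      ‖T x - T xbar - DT xbar (x - xbar)‖ ≤ W / 2 * ‖x - xbar‖ ^ 2 := by
    intro x hx
    set v := x - xbar with hv
    have hvr : ‖v‖ ≤ r := by
      rwa [mem_closedBall, dist_eq_norm] at hx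
    have hmem : ∀ t ∈ Set.Icc (0:ℝ) 1, xbar + t • v ∈ closedBall xbar rstar := by
      intro t ht
      rw [mem_closedBall, dist_eq_norm, add_sub_cancel_left, norm_smul, Real.norm_eq_abs,
        abs_of_nonneg ht.1]
      calc t * ‖v‖ ≤ 1 * ‖v‖ := by
            apply mul_le_mul_of_nonneg_right ht.2 (norm_nonneg v)
        _ ≤ rstar := by rw [one_mul]; exact hvr.trans hrr
    set g : ℝ → X := fun t => T (xbar + t • v) - T xbar - t • (DT xbar v) with hg
    set g' : ℝ → X := fun t => DT (xbar + t • v) v - DT xbar v with hg'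
    have hgderiv : ∀ t ∈ Set.Icc (0:ℝ) 1, HasDerivAt g (g' t) t := by
      intro t ht
      have hline : HasDerivAt (fun t : ℝ => xbar + t • v) v t := by
        simpa using ((hasDerivAt_id t).smul_const v).const_add xbar
      have h1' : HasDerivAt (fun t : ℝ => T (xbar + t • v)) (DT (xbar + t • v) v) t :=
        (hC1 _ (hmem t ht)).comp_hasDerivAt t hline
      have h2' : HasDerivAt (fun t : ℝ => t • (DT xbar v)) (DT xbar v) t := by
        simpa using (hasDerivAt_id t).smul_const (DT xbar v)
      exact (h1'.sub_const (T xbar)).sub h2'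
    have key : ∀ t ∈ Set.Icc (0:ℝ) 1, ‖g t‖ ≤ W / 2 * ‖v‖ ^ 2 * t ^ 2 := by
      refine image_norm_le_of_norm_deriv_right_le_deriv_boundary
        (f' := g') (B := fun t => W / 2 * ‖v‖ ^ 2 * t ^ 2)
        (B' := fun t => W * ‖v‖ ^ 2 * t) ?_ ?_ ?_ ?_ ?_
      · intro t ht
        exact (hgderiv t ht).continuousAt.continuousWithinAt
      · intro t ht
        exact ((hgderiv t (Set.Ico_subset_Icc_self ht)).hasDerivWithinAt)
      · simp [hg]
      · intro t
        have := ((hasDerivAt_pow 2 t).const_mul (W / 2 * ‖v‖ ^ 2))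
        refine this.congr_deriv ?_
        ring
      · intro t ht
        have hmem' := hmem t (Set.Ico_subset_Icc_self ht)
        have hb := hW _ hmem'
        have hnv : ‖xbar + t • v - xbar‖ = t * ‖v‖ := by
          rw [add_sub_cancel_left, norm_smul, Real.norm_eq_abs, abs_of_nonneg ht.1]
        calc ‖g' t‖ = ‖(DT (xbar + t • v) - DT xbar) v‖ := by
              simp [hg', ContinuousLinearMap.sub_apply]
          _ ≤ ‖DT (xbar + t • v) - DT xbar‖ * ‖v‖ := (DT (xbar + t • v) - DT xbar).le_opNorm v
          _ ≤ (W * (t * ‖v‖)) * ‖v‖ := by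
              apply mul_le_mul_of_nonneg_right _ (norm_nonneg v)
              rw [← hnv]; exact hb
          _ = W * ‖v‖ ^ 2 * t := by ring
    have hk1 := key 1 (by norm_num)
    simp only [hg, one_smul, one_pow, mul_one] at hk1
    rwa [show xbar + v = x from by rw [hv]; abel] at hk1
  -- Lipschitz estimate on the ball
  have hK : ∀ z ∈ closedBall xbar r, ‖DT z‖ ≤ Z + W * r := by
    intro z hz
    have hz' : ‖z - xbar‖ ≤ r := by rwa [mem_closedBall, dist_eq_norm] at hz
    calc ‖DT z‖ ≤ ‖DT xbar‖ + ‖DT z - DT xbar‖ := by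
          simpa using norm_add_le (DT xbar) (DT z - DT xbar)
      _ ≤ Z + W * ‖z - xbar‖ := add_le_add hZ (hW z (hsub hz))
      _ ≤ Z + W * r := by nlinarith
  have hlip : ∀ x ∈ closedBall xbar r, ∀ y ∈ closedBall xbar r,
      ‖T x - T y‖ ≤ (Z + W * r) * ‖x - y‖ := by
    intro x hx y hy
    exact (convex_closedBall xbar r).norm_image_sub_le_of_norm_hasFDerivWithin_le
      (fun z hz => (hC1 z (hsub hz)).hasFDerivWithinAt) hK hy hx
  -- Self-map
  have hself : ∀ x ∈ closedBall xbar r, T x ∈ closedBall xbar r := by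
    intro x hx
    have hx' : ‖x - xbar‖ ≤ r := by rwa [mem_closedBall, dist_eq_norm] at hx
    have ht := taylor x hx
    have hdz : ‖DT xbar (x - xbar)‖ ≤ Z * ‖x - xbar‖ := by
      calc ‖DT xbar (x - xbar)‖ ≤ ‖DT xbar‖ * ‖x - xbar‖ := (DT xbar).le_opNorm _
        _ ≤ Z * ‖x - xbar‖ := mul_le_mul_of_nonneg_right hZ (norm_nonneg _)
    rw [mem_closedBall, dist_eq_norm]
    have : ‖T x - xbar‖ ≤ W / 2 * ‖x - xbar‖ ^ 2 + Z * ‖x - xbar‖ + Y := by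
      calc ‖T x - xbar‖
          = ‖(T x - T xbar - DT xbar (x - xbar)) + DT xbar (x - xbar) + (T xbar - xbar)‖ := by
            congr 1; abel
        _ ≤ ‖T x - T xbar - DT xbar (x - xbar)‖ + ‖DT xbar (x - xbar)‖ + ‖T xbar - xbar‖ :=
            norm_add₃_le
        _ ≤ W / 2 * ‖x - xbar‖ ^ 2 + Z * ‖x - xbar‖ + Y := by
            exact add_le_add (add_le_add ht hdz) hY
    have hnn : (0:ℝ) ≤ ‖x - xbar‖ := norm_nonneg _
    have hs2 : ‖x - xbar‖ ^ 2 ≤ r ^ 2 := by nlinarith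
    nlinarith [mul_le_mul_of_nonneg_left hx' hZ0, mul_le_mul_of_nonneg_left hs2 hW0]
  -- Uniqueness part
  have uniq : ∀ x ∈ closedBall xbar r, ∀ y ∈ closedBall xbar r, T x = x → T y = y → x = y := by
    intro x hx y hy hfx hfy
    by_contra hne
    have hpos : 0 < ‖x - y‖ := by
      rw [norm_pos_iff, sub_ne_zero]; exact hne
    have := hlip x hx y hy
    rw [hfx, hfy] at this
    nlinarith
  -- Existence via Banach fixed point on the subtype
  haveI : CompleteSpace (closedBall xbar r) :=
    @IsClosed.completeSpace_coe _ _ _ _ isClosed_closedBall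
  haveI : Nonempty (closedBall xbar r) := ⟨⟨xbar, mem_closedBall_self hr0.le⟩⟩
  set K : NNReal := ⟨Z + W * r, by positivity⟩ with hKdef
  set f : closedBall xbar r → closedBall xbar r := fun p => ⟨T p.1, hself p.1 p.2⟩ with hf
  have hcontr : ContractingWith K f := by
    constructor
    · exact_mod_cast h2
    · apply LipschitzWith.of_dist_le_mul
      intro p q
      have := hlip p.1 p.2 q.1 q.2
      simp only [hf, Subtype.dist_eq, dist_eq_norm]
      exact this
  set x₀ : closedBall xbar r := ContractingWith.fixedPoint f hcontr with hx₀def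
  have hx₀ : f x₀ = x₀ := hcontr.fixedPoint_isFixedPt
  have hTx : T x₀.1 = x₀.1 := by
    simpa [hf, Subtype.ext_iff] using congrArg Subtype.val hx₀
  refine ⟨x₀.1, ⟨x₀.2, hTx⟩, ?_⟩
  rintro y ⟨hy, hTy⟩
  exact uniq y hy x₀.1 x₀.2 hTy hTx
end

section
/- Let X = ∏_{m=1}^M X^m be a product of Banach spaces, x̄ ∈ X, r* ∈ ℝ_{>0}^M, and T : box(x̄, r*) → X a C¹ map, where box(x̄, r) = { x : ‖π^m(x − x̄)‖ ≤ r^m for all m }. Suppose nonnegative numbers Y^m, Z^m_i, W^m_{ij} satisfy ‖π^m(T(x̄) − x̄)‖ ≤ Y^m, ‖π^m D_i T(x̄)‖ ≤ Z^m_i, and ‖π^m(D_i T(x) − D_i T(x̄))‖ ≤ ∑_j W^m_{ij} ‖π^j(x − x̄)‖ for all x ∈ box(x̄, r*). If there exist r ≤ r* and η ∈ ℝ_{>0}^M with, for each m, Y^m + ∑_i Z^m_i r^i + (1/2)∑_{i,j} W^m_{ij} r^i r^j ≤ r^m and ∑_i Z^m_i η^i + ∑_{i,j} W^m_{ij} η^i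 r^j < η^m, then T has a unique fixed point in box(x̄, r). -/
/-- Fixed point theorem on a product of Banach spaces (Theorem 2.12 of the paper):
with componentwise bounds `Y^m`, `Z^m_i`, `W^m_{ij}` on the residual, the partial
derivatives, and the Lipschitz constants of the partial derivatives of `T` in the box
`box(x̄, r*)`, and radii `r ≤ r*`, weights `η > 0` satisfying the radii polynomial
inequalities, `T` has a unique fixed point in `box(x̄, r)`. -/
theorem stmt4_fixed_point_product {M : ℕ} (hM : 1 ≤ M)
    (X : Fin M → Type*) [∀ m, NormedAddCommGroup (X m)] [∀ m, NormedSpace ℝ (X m)]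
    [∀ m, CompleteSpace (X m)]
    (xbar : ∀ m, X m) (rstar : Fin M → ℝ) (hrstar : ∀ m, 0 < rstar m)
    (T : (∀ m, X m) → ∀ m, X m)
    (DT : (∀ m, X m) → ((∀ m, X m) →L[ℝ] ∀ m, X m))
    (hC1 : ∀ x : ∀ m, X m, (∀ m, ‖x m - xbar m‖ ≤ rstar m) → HasFDerivAt T (DT x) x)
    (Y : Fin M → ℝ) (Z : Fin M → Fin M → ℝ) (W : Fin M → Fin M → Fin M → ℝ)
    (hY0 : ∀ m, 0 ≤ Y m) (hZ0 : ∀ m i, 0 ≤ Z m i) (hW0 : ∀ m i j, 0 ≤ W m i j)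
    (hY : ∀ m, ‖T xbar m - xbar m‖ ≤ Y m)
    (hZ : ∀ m i, ∀ h : X i, ‖DT xbar (Pi.single i h) m‖ ≤ Z m i * ‖h‖)
    (hW : ∀ x : ∀ m, X m, (∀ m, ‖x m - xbar m‖ ≤ rstar m) →
      ∀ m i, ∀ h : X i,
        ‖(DT x - DT xbar) (Pi.single i h) m‖ ≤ (∑ j, W m i j * ‖x j - xbar j‖) * ‖h‖)
    (r η : Fin M → ℝ) (hr0 : ∀ m, 0 < r m) (hrle : ∀ m, r m ≤ rstar m)
    (hη : ∀ m, 0 < η m)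
    (h1 : ∀ m, Y m + (∑ i, Z m i * r i) + (1 / 2) * ∑ i, ∑ j, W m i j * r i * r j ≤ r m)
    (h2 : ∀ m, (∑ i, Z m i * η i) + (∑ i, ∑ j, W m i j * η i * r j) < η m) :
    ∃! x : ∀ m, X m, (∀ m, ‖x m - xbar m‖ ≤ r m) ∧ T x = x := by
  classical
  have hMne : Nonempty (Fin M) := ⟨⟨0, hM⟩⟩
  have huniv : (Finset.univ : Finset (Fin M)).Nonempty := Finset.univ_nonempty
  have hxbarB : ∀ m, ‖xbar m - xbar m‖ ≤ r m := fun m => by simpa using (hr0 m).le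
  -- the quantity S m and the contraction constant K
  obtain ⟨S, hSdef⟩ : ∃ S : Fin M → ℝ,
      S = fun m => ∑ i, (Z m i + ∑ j, W m i j * r j) * η i := ⟨_, rfl⟩
  have hSlt : ∀ m, S m < η m := by
    intro m
    have e : S m = (∑ i, Z m i * η i) + (∑ i, ∑ j, W m i j * η i * r j) := by
      simp only [hSdef, add_mul, Finset.sum_add_distrib, Finset.sum_mul]
      congr 1
      exact Finset.sum_congr rfl fun i _ => Finset.sum_congr rfl fun j _ => by ring
    rw [e]; exact h2 m
  have hS0 : ∀ m, 0 ≤ S m := by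
    intro m
    rw [hSdef]
    exact Finset.sum_nonneg fun i _ => mul_nonneg
      (add_nonneg (hZ0 m i) (Finset.sum_nonneg fun j _ => mul_nonneg (hW0 m i j) (hr0 j).le))
      (hη i).le
  obtain ⟨K, hKdef⟩ : ∃ K : ℝ, K = Finset.univ.sup' huniv (fun m => S m / η m) := ⟨_, rfl⟩
  have hK1 : K < 1 := by
    rw [hKdef, Finset.sup'_lt_iff]
    exact fun m _ => (div_lt_one (hη m)).2 (hSlt m)
  have hK0 : 0 ≤ K := by
    obtain ⟨m⟩ := hMne
    rw [hKdef]
    exact le_trans (div_nonneg (hS0 m) (hη m).le)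
      (Finset.le_sup' (fun m => S m / η m) (Finset.mem_univ m))
  have hSK : ∀ m, S m ≤ K * η m := by
    intro m
    have h := Finset.le_sup' (fun m => S m / η m) (Finset.mem_univ m)
    rw [← hKdef] at h
    calc S m = S m / η m * η m := (div_mul_cancel₀ _ (hη m).ne').symm
    _ ≤ K * η m := mul_le_mul_of_nonneg_right h (hη m).le
  -- componentwise bound on the derivative
  have hDbound : ∀ z, (∀ m, ‖z m - xbar m‖ ≤ rstar m) → ∀ h : (∀ m, X m), ∀ m,
      ‖DT z h m‖ ≤ ∑ i, (Z m i + ∑ j, W m i j * ‖z j - xbar j‖) * ‖h i‖ := by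
    intro z hz h m
    have hsum : (∑ i, Pi.single i (h i)) = h := Finset.univ_sum_single h
    have e : DT z h m = ∑ i, DT z (Pi.single i (h i)) m := by
      conv_lhs => rw [← hsum]
      rw [map_sum]
      simp
    rw [e]
    refine (norm_sum_le _ _).trans (Finset.sum_le_sum fun i _ => ?_)
    have e1 : DT z (Pi.single i (h i)) m
        = DT xbar (Pi.single i (h i)) m + (DT z - DT xbar) (Pi.single i (h i)) m := by
      simp
    rw [e1, add_mul]
    exact (norm_add_le _ _).trans (add_le_add (hZ m i (h i)) (hW z hz m i (h i)))
  -- weighted bound on the derivative inside the box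
  have hDK : ∀ z, (∀ m, ‖z m - xbar m‖ ≤ r m) → ∀ (h : ∀ m, X m) (c : ℝ), 0 ≤ c →
      (∀ i, ‖h i‖ ≤ c * η i) → ∀ m, ‖DT z h m‖ ≤ K * c * η m := by
    intro z hz h c hc hch m
    refine (hDbound z (fun k => (hz k).trans (hrle k)) h m).trans ?_
    have step : ∑ i, (Z m i + ∑ j, W m i j * ‖z j - xbar j‖) * ‖h i‖
        ≤ ∑ i, (Z m i + ∑ j, W m i j * r j) * (c * η i) := by
      refine Finset.sum_le_sum fun i _ => mul_le_mul ?_ (hch i) (norm_nonneg _) ?_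
      · exact add_le_add le_rfl
          (Finset.sum_le_sum fun j _ => mul_le_mul_of_nonneg_left (hz j) (hW0 m i j))
      · exact add_nonneg (hZ0 m i)
          (Finset.sum_nonneg fun j _ => mul_nonneg (hW0 m i j) (hr0 j).le)
    refine step.trans ?_
    have e : ∑ i, (Z m i + ∑ j, W m i j * r j) * (c * η i) = c * S m := by
      rw [hSdef, Finset.mul_sum]
      exact Finset.sum_congr rfl fun i _ => by ring
    rw [e]
    calc c * S m ≤ c * (K * η m) := mul_le_mul_of_nonneg_left (hSK m) hc
    _ = K * c * η m := by ring
  -- segments between points of the box stay in the box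
  have hseg_mem : ∀ (x y : ∀ m, X m), (∀ m, ‖x m - xbar m‖ ≤ r m) →
      (∀ m, ‖y m - xbar m‖ ≤ r m) →
      ∀ t ∈ Set.Icc (0:ℝ) 1, ∀ m, ‖(x + t • (y - x)) m - xbar m‖ ≤ r m := by
    intro x y hx hy t ht m
    have e : (x + t • (y - x)) m - xbar m
        = (1 - t) • (x m - xbar m) + t • (y m - xbar m) := by
      simp only [Pi.add_apply, Pi.smul_apply, Pi.sub_apply, smul_sub, sub_smul, one_smul]
      abel
    rw [e]
    have h1t : (0:ℝ) ≤ 1 - t := by linarith [ht.2]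
    calc ‖(1 - t) • (x m - xbar m) + t • (y m - xbar m)‖
        ≤ ‖(1 - t) • (x m - xbar m)‖ + ‖t • (y m - xbar m)‖ := norm_add_le _ _
    _ ≤ (1 - t) * r m + t * r m := by
        rw [norm_smul, norm_smul, Real.norm_of_nonneg h1t, Real.norm_of_nonneg ht.1]
        exact add_le_add (mul_le_mul_of_nonneg_left (hx m) h1t)
          (mul_le_mul_of_nonneg_left (hy m) ht.1)
    _ = r m := by ring
  -- mean value inequality along a segment
  have hMVT : ∀ (p u : ∀ m, X m),
      (∀ t ∈ Set.Icc (0:ℝ) 1, ∀ m, ‖(p + t • u) m - xbar m‖ ≤ rstar m) →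
      ∀ (m : Fin M) (a b : ℝ),
      (∀ t ∈ Set.Icc (0:ℝ) 1, ‖DT (p + t • u) u m‖ ≤ a + t * b) →
      ‖T (p + u) m - T p m‖ ≤ a + b / 2 := by
    intro p u hmem m a b hbd
    have hγd : ∀ t : ℝ, HasDerivAt (fun s : ℝ => p + s • u) u t := by
      intro t
      simpa using ((hasDerivAt_id t).smul_const u).const_add p
    have hfd : ∀ t ∈ Set.Icc (0:ℝ) 1,
        HasDerivAt (fun s => T (p + s • u) m - T p m) (DT (p + t • u) u m) t := by
      intro t ht
      have hT : HasDerivAt (fun s => T (p + s • u)) (DT (p + t • u) u) t := by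
        have := (hC1 (p + t • u) (hmem t ht)).comp_hasDerivAt t (hγd t)
        simpa [Function.comp_def] using this
      have hTm : HasDerivAt (fun s => T (p + s • u) m) (DT (p + t • u) u m) t := by
        have := (ContinuousLinearMap.proj (R := ℝ) (φ := X) m).hasFDerivAt.comp_hasDerivAt t hT
        simpa [Function.comp_def] using this
      simpa using hTm.sub_const (T p m)
    have hB' : ∀ x : ℝ, HasDerivAt (fun t => a * t + b / 2 * (t * t)) (a + x * b) x := by
      intro x
      have h1' : HasDerivAt (fun t : ℝ => a * t) (a * 1) x := (hasDerivAt_id x).const_mul a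
      have h2' : HasDerivAt (fun t : ℝ => b / 2 * (t * t)) (b / 2 * (1 * x + x * 1)) x :=
        ((hasDerivAt_id x).mul (hasDerivAt_id x)).const_mul (b / 2)
      have := h1'.add h2'
      rw [show a + x * b = a * 1 + b / 2 * (1 * x + x * 1) by ring]
      exact this
    have key : ∀ x ∈ Set.Icc (0:ℝ) 1,
        ‖T (p + x • u) m - T p m‖ ≤ a * x + b / 2 * (x * x) := by
      intro x hx
      exact image_norm_le_of_norm_deriv_right_le_deriv_boundary
        (f := fun s => T (p + s • u) m - T p m) (f' := fun s => DT (p + s • u) u m)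
        (fun t ht => (hfd t ht).continuousAt.continuousWithinAt)
        (fun t ht => (hfd t (Set.Ico_subset_Icc_self ht)).hasDerivWithinAt)
        (B := fun t => a * t + b / 2 * (t * t)) (B' := fun t => a + t * b)
        (by simp) hB'
        (fun t ht => hbd t (Set.Ico_subset_Icc_self ht)) hx
    have h := key 1 ⟨zero_le_one, le_rfl⟩
    rw [one_smul] at h
    calc ‖T (p + u) m - T p m‖ ≤ a * 1 + b / 2 * (1 * 1) := h
    _ = a + b / 2 := by ring
  -- T maps the box into itself
  have hself : ∀ x, (∀ m, ‖x m - xbar m‖ ≤ r m) → ∀ m, ‖T x m - xbar m‖ ≤ r m := by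
    intro x hx m
    have hmem : ∀ t ∈ Set.Icc (0:ℝ) 1, ∀ k,
        ‖(xbar + t • (x - xbar)) k - xbar k‖ ≤ rstar k :=
      fun t ht k => (hseg_mem xbar x hxbarB hx t ht k).trans (hrle k)
    have hTb : ‖T (xbar + (x - xbar)) m - T xbar m‖
        ≤ (∑ i, Z m i * r i) + (∑ i, ∑ j, W m i j * r i * r j) / 2 := by
      refine hMVT xbar (x - xbar) hmem m _ _ ?_
      intro t ht
      refine (hDbound _ (hmem t ht) _ m).trans ?_
      have hnorm : ∀ j, ‖(xbar + t • (x - xbar)) j - xbar j‖ = t * ‖x j - xbar j‖ := by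
        intro j
        have e : (xbar + t • (x - xbar)) j - xbar j = t • (x j - xbar j) := by
          simp [Pi.add_apply, Pi.smul_apply, Pi.sub_apply]
        rw [e, norm_smul, Real.norm_of_nonneg ht.1]
      calc ∑ i, (Z m i + ∑ j, W m i j * ‖(xbar + t • (x - xbar)) j - xbar j‖) * ‖(x - xbar) i‖
          ≤ ∑ i, (Z m i * r i + (∑ j, W m i j * (t * r j)) * r i) := by
            refine Finset.sum_le_sum fun i _ => ?_
            rw [add_mul]
            have hxi : ‖(x - xbar) i‖ ≤ r i := by simpa using hx i
            refine add_le_add (mul_le_mul_of_nonneg_left hxi (hZ0 m i)) ?_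
            refine mul_le_mul ?_ hxi (norm_nonneg _) ?_
            · refine Finset.sum_le_sum fun j _ => ?_
              rw [hnorm j]
              exact mul_le_mul_of_nonneg_left
                (mul_le_mul_of_nonneg_left (hx j) ht.1) (hW0 m i j)
            · exact Finset.sum_nonneg fun j _ => mul_nonneg (hW0 m i j)
                (mul_nonneg ht.1 (hr0 j).le)
      _ = (∑ i, Z m i * r i) + t * ∑ i, ∑ j, W m i j * r i * r j := by
            rw [Finset.sum_add_distrib, Finset.mul_sum]
            congr 1
            refine Finset.sum_congr rfl fun i _ => ?_
            rw [Finset.sum_mul, Finset.mul_sum]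
            exact Finset.sum_congr rfl fun j _ => by ring
    have e : xbar + (x - xbar) = x := by abel
    rw [e] at hTb
    have := hY m
    have htri : ‖T x m - xbar m‖ ≤ ‖T x m - T xbar m‖ + ‖T xbar m - xbar m‖ :=
      norm_sub_le_norm_sub_add_norm_sub _ _ _
    have hh1 := h1 m
    linarith
  -- weighted Lipschitz bound on the box
  have hLip : ∀ x y, (∀ m, ‖x m - xbar m‖ ≤ r m) → (∀ m, ‖y m - xbar m‖ ≤ r m) →
      ∀ (c : ℝ), 0 ≤ c → (∀ i, ‖y i - x i‖ ≤ c * η i) →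
      ∀ m, ‖T y m - T x m‖ ≤ K * c * η m := by
    intro x y hx hy c hc hcle m
    have hmem : ∀ t ∈ Set.Icc (0:ℝ) 1, ∀ k,
        ‖(x + t • (y - x)) k - xbar k‖ ≤ rstar k :=
      fun t ht k => (hseg_mem x y hx hy t ht k).trans (hrle k)
    have h := hMVT x (y - x) hmem m (K * c * η m) 0 ?_
    · have e : x + (y - x) = y := by abel
      rw [e] at h
      simpa using h
    · intro t ht
      have := hDK (x + t • (y - x)) (fun k => hseg_mem x y hx hy t ht k) (y - x) c hc
        (fun i => by simpa using hcle i) m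
      simpa using this
  -- initial defect constant
  obtain ⟨c0, hc0def⟩ : ∃ c0 : ℝ, c0 = Finset.univ.sup' huniv (fun m => Y m / η m) := ⟨_, rfl⟩
  have hc00 : 0 ≤ c0 := by
    rw [hc0def]
    exact le_trans (div_nonneg (hY0 ⟨0, hM⟩) (hη _).le)
      (Finset.le_sup' (fun m => Y m / η m) (Finset.mem_univ ⟨0, hM⟩))
  have hc0 : ∀ m, ‖T xbar m - xbar m‖ ≤ c0 * η m := by
    intro m
    refine (hY m).trans ?_
    have h := Finset.le_sup' (fun m => Y m / η m) (Finset.mem_univ m)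
    rw [← hc0def] at h
    calc Y m = Y m / η m * η m := (div_mul_cancel₀ _ (hη m).ne').symm
    _ ≤ c0 * η m := mul_le_mul_of_nonneg_right h (hη m).le
  -- the Picard iteration
  obtain ⟨u, hu0, husucc⟩ : ∃ u : ℕ → ∀ m, X m, u 0 = xbar ∧ ∀ n, u (n+1) = T (u n) :=
    ⟨fun n => T^[n] xbar, rfl, fun n => Function.iterate_succ_apply' T n xbar⟩
  have hkey : ∀ n, (∀ m, ‖u n m - xbar m‖ ≤ r m) ∧
      (∀ m, ‖u (n+1) m - u n m‖ ≤ K ^ n * c0 * η m) := by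
    intro n
    induction n with
    | zero =>
      refine ⟨fun m => by rw [hu0]; exact hxbarB m, fun m => ?_⟩
      rw [husucc 0, hu0]
      simpa using hc0 m
    | succ n ih =>
      obtain ⟨hbox, hd⟩ := ih
      have hbox' : ∀ m, ‖u (n+1) m - xbar m‖ ≤ r m := by
        rw [husucc n]; exact hself (u n) hbox
      refine ⟨hbox', fun m => ?_⟩
      have h := hLip (u n) (u (n+1)) hbox hbox' (K ^ n * c0)
        (mul_nonneg (pow_nonneg hK0 n) hc00) hd m
      rw [husucc (n+1)]
      calc ‖T (u (n+1)) m - u (n+1) m‖ = ‖T (u (n+1)) m - T (u n) m‖ := by rw [husucc n]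
      _ ≤ K * (K ^ n * c0) * η m := h
      _ = K ^ (n+1) * c0 * η m := by ring
  -- Cauchy sequence
  obtain ⟨ηmax, hηmaxdef⟩ : ∃ e : ℝ, e = Finset.univ.sup' huniv η := ⟨_, rfl⟩
  have hηmax : ∀ m, η m ≤ ηmax := by
    intro m
    rw [hηmaxdef]
    exact Finset.le_sup' η (Finset.mem_univ m)
  have hηmax0 : 0 ≤ ηmax := le_trans (hη ⟨0, hM⟩).le (hηmax _)
  have hcauchy : CauchySeq u := by
    refine cauchySeq_of_le_geometric K (c0 * ηmax) hK1 fun n => ?_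
    rw [dist_pi_le_iff (by positivity)]
    intro m
    rw [dist_eq_norm]
    calc ‖u n m - u (n+1) m‖ = ‖u (n+1) m - u n m‖ := norm_sub_rev _ _
    _ ≤ K ^ n * c0 * η m := (hkey n).2 m
    _ = (K ^ n * c0) * η m := by ring
    _ ≤ (K ^ n * c0) * ηmax :=
        mul_le_mul_of_nonneg_left (hηmax m) (mul_nonneg (pow_nonneg hK0 n) hc00)
    _ = c0 * ηmax * K ^ n := by ring
  obtain ⟨xs, hxs⟩ := cauchySeq_tendsto_of_complete hcauchy
  have hxsbox : ∀ m, ‖xs m - xbar m‖ ≤ r m := by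
    intro m
    have hclosed : IsClosed {x : ∀ k, X k | ‖x m - xbar m‖ ≤ r m} :=
      isClosed_le (continuous_norm.comp ((continuous_apply m).sub continuous_const))
        continuous_const
    exact hclosed.mem_of_tendsto hxs (Filter.Eventually.of_forall fun n => (hkey n).1 m)
  have hTxs : T xs = xs := by
    have hcont : ContinuousAt T xs :=
      (hC1 xs (fun m => (hxsbox m).trans (hrle m))).continuousAt
    have ha : Filter.Tendsto (fun n => T (u n)) Filter.atTop (nhds (T xs)) :=
      hcont.tendsto.comp hxs
    have hb : Filter.Tendsto (fun n => T (u n)) Filter.atTop (nhds xs) := by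
      have e : (fun n => T (u n)) = fun n => u (n+1) := funext fun n => (husucc n).symm
      rw [e]
      exact hxs.comp (Filter.tendsto_add_atTop_nat 1)
    exact tendsto_nhds_unique ha hb
  -- uniqueness
  have uniq : ∀ a b : ∀ m, X m, (∀ m, ‖a m - xbar m‖ ≤ r m) → T a = a →
      (∀ m, ‖b m - xbar m‖ ≤ r m) → T b = b → a = b := by
    intro a b ha hTa hb hTb
    obtain ⟨c, hcdef⟩ : ∃ c : ℝ,
        c = Finset.univ.sup' huniv (fun m => ‖b m - a m‖ / η m) := ⟨_, rfl⟩
    have hcge : ∀ i, ‖b i - a i‖ ≤ c * η i := by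
      intro i
      have h := Finset.le_sup' (fun m => ‖b m - a m‖ / η m) (Finset.mem_univ i)
      rw [← hcdef] at h
      calc ‖b i - a i‖ = ‖b i - a i‖ / η i * η i := (div_mul_cancel₀ _ (hη i).ne').symm
      _ ≤ c * η i := mul_le_mul_of_nonneg_right h (hη i).le
    have hc0' : 0 ≤ c := by
      rw [hcdef]
      exact le_trans (div_nonneg (norm_nonneg _) (hη ⟨0, hM⟩).le)
        (Finset.le_sup' (fun m => ‖b m - a m‖ / η m) (Finset.mem_univ ⟨0, hM⟩))
    obtain ⟨m, _, hm⟩ := Finset.exists_mem_eq_sup' huniv (fun m => ‖b m - a m‖ / η m)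
    have hcm : c = ‖b m - a m‖ / η m := by rw [hcdef]; exact hm
    have hbound := hLip a b ha hb c hc0' hcge m
    rw [hTa, hTb] at hbound
    have hcKc : c ≤ K * c :=
      hcm.le.trans ((div_le_iff₀ (hη m)).2 hbound)
    have hceq : c = 0 := le_antisymm (by nlinarith) hc0'
    funext k
    have h := hcge k
    rw [hceq, zero_mul] at h
    have : b k - a k = 0 := norm_le_zero_iff.mp h
    exact (sub_eq_zero.mp this).symm
  exact ⟨xs, ⟨hxsbox, hTxs⟩, fun y hy => uniq y xs hy.1 hy.2 hxsbox hTxs⟩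
end
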